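/- arXiv:0903.4812 — 5 statements merged into one kernel-verified Lean document; each statement's English description precedes it below -/
import Mathlib

section
/- Survey transitivity: Let P be a finitely-supported distribution on a finite-dimensional real vector space V. If C is a survey of P (on some skeleton) and D is a survey of C (on some skeleton), then D is a survey of P, i.e., there exists a skeleton (T, γ₁,…,γ_m) with base set equal to that of D such that P(D = Tᵢ) = E[γᵢ(P)] for all i. -/
open Finset

/-- Transitivity of surveys: if `C` is a survey of `P` on the skeleton
`(S, α)` and `D` is a survey of `C` on the skeleton `(T, β)`, then `D` is a
survey of `P`: there are decomposition functions `γ` making `(T, γ)` a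
skeleton (on the convex hull containing the support of `P`) with
`P(D = Tᵢ) = E[γᵢ(P)]`. -/
theorem survey_transitive {V : Type*} [AddCommGroup V] [Module ℝ V]
    [FiniteDimensional ℝ V] {n m : ℕ}
    (S : Fin n → V) (α : Fin n → V → ℝ)
    (hα01 : ∀ η ∈ convexHull ℝ (Set.range S), ∀ i, α i η ∈ Set.Icc (0:ℝ) 1)
    (hαsum : ∀ η ∈ convexHull ℝ (Set.range S), ∑ i, α i η = 1)
    (hαdec : ∀ η ∈ convexHull ℝ (Set.range S), ∑ i, α i η • S i = η)
    (T : Fin m → V) (β : Fin m → V → ℝ)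
    (hST : ∀ j, S j ∈ convexHull ℝ (Set.range T))
    (hβ01 : ∀ η ∈ convexHull ℝ (Set.range T), ∀ i, β i η ∈ Set.Icc (0:ℝ) 1)
    (hβsum : ∀ η ∈ convexHull ℝ (Set.range T), ∑ i, β i η = 1)
    (hβdec : ∀ η ∈ convexHull ℝ (Set.range T), ∑ i, β i η • T i = η)
    (p : V →₀ ℝ) (hp0 : ∀ η, 0 ≤ p η) (hp1 : ∑ η ∈ p.support, p η = 1)
    (hpsupp : (p.support : Set V) ⊆ convexHull ℝ (Set.range S))
    (c : Fin n → ℝ) (hc : ∀ j, c j = ∑ η ∈ p.support, p η * α j η)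
    (d : Fin m → ℝ) (hd : ∀ i, d i = ∑ j, c j * β i (S j)) :
    ∃ γ : Fin m → V → ℝ,
      (∀ η ∈ convexHull ℝ (Set.range S),
        (∀ i, γ i η ∈ Set.Icc (0:ℝ) 1) ∧
        (∑ i, γ i η = 1) ∧ (∑ i, γ i η • T i = η)) ∧
      (∀ i, d i = ∑ η ∈ p.support, p η * γ i η) := by

  refine ⟨fun i η => ∑ j, α j η * β i (S j), ?_, ?_⟩
  · intro η hη
    have hαn : ∀ j, 0 ≤ α j η := fun j => (hα01 η hη j).1
    have hβn : ∀ i j, β i (S j) ∈ Set.Icc (0:ℝ) 1 := fun i j => hβ01 _ (hST j) i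
    refine ⟨fun i => ⟨Finset.sum_nonneg fun j _ => mul_nonneg (hαn j) (hβn i j).1, ?_⟩, ?_, ?_⟩
    · calc ∑ j, α j η * β i (S j) ≤ ∑ j, α j η * 1 :=
            Finset.sum_le_sum fun j _ => mul_le_mul_of_nonneg_left (hβn i j).2 (hαn j)
        _ = 1 := by simpa using hαsum η hη
    · rw [Finset.sum_comm]
      calc ∑ j, ∑ i, α j η * β i (S j) = ∑ j, α j η * ∑ i, β i (S j) := by
            simp [Finset.mul_sum]
        _ = ∑ j, α j η * 1 := by
            exact Finset.sum_congr rfl fun j _ => by rw [hβsum _ (hST j)]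
        _ = 1 := by simpa using hαsum η hη
    · have : ∑ i, (∑ j, α j η * β i (S j)) • T i
          = ∑ j, α j η • ∑ i, β i (S j) • T i := by
        simp only [Finset.sum_smul]
        rw [Finset.sum_comm]
        simp [Finset.smul_sum, mul_smul]
      rw [this]
      calc ∑ j, α j η • ∑ i, β i (S j) • T i = ∑ j, α j η • S j :=
            Finset.sum_congr rfl fun j _ => by rw [hβdec _ (hST j)]
        _ = η := hαdec η hη
  · intro i
    rw [hd i]
    calc ∑ j, c j * β i (S j)
        = ∑ j, ∑ η ∈ p.support, p η * α j η * β i (S j) := by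
          exact Finset.sum_congr rfl fun j _ => by rw [hc j, Finset.sum_mul]
      _ = ∑ η ∈ p.support, ∑ j, p η * α j η * β i (S j) := Finset.sum_comm
      _ = ∑ η ∈ p.support, p η * ∑ j, α j η * β i (S j) := by
          simp [Finset.mul_sum, mul_assoc]
end

section
/- Mixtures of surveys are surveys: Let P₁ and P₂ be finitely-supported distributions on a finite-dimensional real vector space V, and let C₁, C₂ be surveys of P₁, P₂ respectively. Fix p ∈ [0,1], and define P as the mixture p·P₁ + (1−p)·P₂ and C as the mixture p·C₁ + (1−p)·C₂ (as distributions). Then C is a survey of P. -/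
open Finset

lemma exists_weights {V : Type*} [AddCommGroup V] [Module ℝ V] {n : ℕ}
    (S : Fin n → V) (η : V) (hη : η ∈ convexHull ℝ (Set.range S)) :
    ∃ w : Fin n → ℝ, (∀ i, 0 ≤ w i) ∧ ∑ i, w i = 1 ∧ ∑ i, w i • S i = η := by
  classical
  rw [mem_convexHull_iff_exists_fintype] at hη
  obtain ⟨ι, _, w, z, hw0, hw1, hz, hx⟩ := hη
  choose g hg using hz
  refine ⟨fun j => ∑ i ∈ univ.filter (fun i => g i = j), w i, ?_, ?_, ?_⟩
  · exact fun j => Finset.sum_nonneg fun i _ => hw0 i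
  · rw [Finset.sum_fiberwise]; exact hw1
  · rw [← hx]
    simp only [Finset.sum_smul]
    rw [← Finset.sum_fiberwise univ g (fun i => w i • z i)]
    refine Finset.sum_congr rfl fun j _ => Finset.sum_congr rfl fun i hi => ?_
    rw [Finset.mem_filter] at hi
    rw [← hi.2, hg]

/-- `c` is a survey of `p`: there is a skeleton `(S, α)` whose convex hull
contains the support of `p`, such that the probability that the survey equals
`v` is `∑_{i : Sᵢ = v} E[αᵢ(p)]`. -/
def IsSurvey {V : Type*} [AddCommGroup V] [Module ℝ V] [DecidableEq V]
    (p c : V →₀ ℝ) : Prop :=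
  ∃ (n : ℕ) (S : Fin n → V) (α : Fin n → V → ℝ),
    (∀ η ∈ convexHull ℝ (Set.range S),
      (∀ i, α i η ∈ Set.Icc (0:ℝ) 1) ∧
      (∑ i, α i η = 1) ∧ (∑ i, α i η • S i = η)) ∧
    ((p.support : Set V) ⊆ convexHull ℝ (Set.range S)) ∧
    (∀ v, c v = ∑ i ∈ Finset.univ.filter (fun i => S i = v),
      ∑ η ∈ p.support, p η * α i η)

/-- Mixtures of surveys are surveys: if `C₁, C₂` are surveys of `P₁, P₂`
respectively and `t ∈ [0,1]`, then `t·C₁ + (1−t)·C₂` is a survey of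
`t·P₁ + (1−t)·P₂`. -/
theorem mixture_of_surveys {V : Type*} [AddCommGroup V] [Module ℝ V]
    [FiniteDimensional ℝ V] [DecidableEq V]
    (p₁ p₂ c₁ c₂ : V →₀ ℝ)
    (hp₁0 : ∀ η, 0 ≤ p₁ η) (hp₁1 : ∑ η ∈ p₁.support, p₁ η = 1)
    (hp₂0 : ∀ η, 0 ≤ p₂ η) (hp₂1 : ∑ η ∈ p₂.support, p₂ η = 1)
    (h₁ : IsSurvey p₁ c₁) (h₂ : IsSurvey p₂ c₂)
    (t : ℝ) (ht0 : 0 ≤ t) (ht1 : t ≤ 1) :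
    IsSurvey (t • p₁ + (1 - t) • p₂) (t • c₁ + (1 - t) • c₂) := by
  classical
  rcases eq_or_lt_of_le ht0 with rfl | ht0'
  · simp only [zero_smul, sub_zero, one_smul, zero_add]; exact h₂
  rcases eq_or_lt_of_le ht1 with rfl | ht1'
  · simp only [one_smul, sub_self, zero_smul, add_zero]; exact h₁
  have ht' : (0:ℝ) < 1 - t := by linarith
  obtain ⟨n₁, S₁, α₁, hsk₁, hsupp₁, hc₁⟩ := h₁
  obtain ⟨n₂, S₂, α₂, hsk₂, hsupp₂, hc₂⟩ := h₂
  set P : V →₀ ℝ := t • p₁ + (1 - t) • p₂ with hPdef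
  have hPapp : ∀ η, P η = t * p₁ η + (1 - t) * p₂ η := by
    intro η; simp [hPdef, smul_eq_mul]
  have hP0 : ∀ η, 0 ≤ P η := fun η => by
    rw [hPapp]
    exact add_nonneg (mul_nonneg ht0 (hp₁0 η)) (mul_nonneg (le_of_lt ht') (hp₂0 η))
  have hsub1 : p₁.support ⊆ P.support := by
    intro η hη
    rw [Finsupp.mem_support_iff] at hη ⊢
    have h1 : 0 < p₁ η := lt_of_le_of_ne (hp₁0 η) (Ne.symm hη)
    have : 0 < P η := by
      rw [hPapp]
      have := mul_nonneg (le_of_lt ht') (hp₂0 η)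
      nlinarith
    exact ne_of_gt this
  have hsub2 : p₂.support ⊆ P.support := by
    intro η hη
    rw [Finsupp.mem_support_iff] at hη ⊢
    have h1 : 0 < p₂ η := lt_of_le_of_ne (hp₂0 η) (Ne.symm hη)
    have : 0 < P η := by
      rw [hPapp]
      have := mul_nonneg ht0 (hp₁0 η)
      nlinarith
    exact ne_of_gt this
  set Sc : Fin (n₁ + n₂) → V := Fin.append S₁ S₂ with hScdef
  have hr1 : Set.range S₁ ⊆ Set.range Sc := by
    rintro _ ⟨i, rfl⟩; exact ⟨Fin.castAdd n₂ i, Fin.append_left _ _ _⟩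
  have hr2 : Set.range S₂ ⊆ Set.range Sc := by
    rintro _ ⟨i, rfl⟩; exact ⟨Fin.natAdd n₁ i, Fin.append_right _ _ _⟩
  have hull1 : convexHull ℝ (Set.range S₁) ⊆ convexHull ℝ (Set.range Sc) :=
    convexHull_mono hr1
  have hull2 : convexHull ℝ (Set.range S₂) ⊆ convexHull ℝ (Set.range Sc) :=
    convexHull_mono hr2
  have hmem1 : ∀ η, p₁ η ≠ 0 → η ∈ convexHull ℝ (Set.range S₁) := fun η h =>
    hsupp₁ (by simpa [Finsupp.mem_support_iff] using h)
  have hmem2 : ∀ η, p₂ η ≠ 0 → η ∈ convexHull ℝ (Set.range S₂) := fun η h =>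
    hsupp₂ (by simpa [Finsupp.mem_support_iff] using h)
  refine ⟨n₁ + n₂, Sc, fun i η =>
    if h0 : P η = 0 then
      (if hη : η ∈ convexHull ℝ (Set.range Sc) then (exists_weights Sc η hη).choose i else 0)
    else
      Fin.addCases (fun i₁ => t * p₁ η * α₁ i₁ η / P η)
        (fun i₂ => (1 - t) * p₂ η * α₂ i₂ η / P η) i, ?_, ?_, ?_⟩
  · -- skeleton condition
    intro η hη
    have key : (∀ i : Fin (n₁ + n₂),
        0 ≤ (if h0 : P η = 0 then
          (if hη' : η ∈ convexHull ℝ (Set.range Sc) then (exists_weights Sc η hη').choose i else 0)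
        else Fin.addCases (fun i₁ => t * p₁ η * α₁ i₁ η / P η)
          (fun i₂ => (1 - t) * p₂ η * α₂ i₂ η / P η) i)) ∧
        (∑ i, (if h0 : P η = 0 then
          (if hη' : η ∈ convexHull ℝ (Set.range Sc) then (exists_weights Sc η hη').choose i else 0)
        else Fin.addCases (fun i₁ => t * p₁ η * α₁ i₁ η / P η)
          (fun i₂ => (1 - t) * p₂ η * α₂ i₂ η / P η) i) = 1) ∧
        (∑ i, (if h0 : P η = 0 then
          (if hη' : η ∈ convexHull ℝ (Set.range Sc) then (exists_weights Sc η hη').choose i else 0)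
        else Fin.addCases (fun i₁ => t * p₁ η * α₁ i₁ η / P η)
          (fun i₂ => (1 - t) * p₂ η * α₂ i₂ η / P η) i) • Sc i = η) := by
      by_cases h0 : P η = 0
      · simp only [dif_pos h0, dif_pos hη]
        obtain ⟨w0, w1, w2⟩ := (exists_weights Sc η hη).choose_spec
        exact ⟨w0, w1, w2⟩
      · simp only [dif_neg h0]
        have hs1 : ∑ i₁ : Fin n₁, t * p₁ η * α₁ i₁ η = t * p₁ η ∧
            ∑ i₁ : Fin n₁, (t * p₁ η * α₁ i₁ η) • S₁ i₁ = (t * p₁ η) • η := by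
          by_cases hp : p₁ η = 0
          · simp [hp]
          · obtain ⟨_, hs, hcmb⟩ := hsk₁ η (hmem1 η hp)
            constructor
            · rw [← Finset.mul_sum, hs, mul_one]
            · calc ∑ i₁ : Fin n₁, (t * p₁ η * α₁ i₁ η) • S₁ i₁
                  = (t * p₁ η) • ∑ i₁ : Fin n₁, α₁ i₁ η • S₁ i₁ := by
                    rw [Finset.smul_sum]; exact Finset.sum_congr rfl fun i _ => (smul_smul _ _ _).symm
                _ = (t * p₁ η) • η := by rw [hcmb]
        have hs2 : ∑ i₂ : Fin n₂, (1 - t) * p₂ η * α₂ i₂ η = (1 - t) * p₂ η ∧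
            ∑ i₂ : Fin n₂, ((1 - t) * p₂ η * α₂ i₂ η) • S₂ i₂ = ((1 - t) * p₂ η) • η := by
          by_cases hp : p₂ η = 0
          · simp [hp]
          · obtain ⟨_, hs, hcmb⟩ := hsk₂ η (hmem2 η hp)
            constructor
            · rw [← Finset.mul_sum, hs, mul_one]
            · calc ∑ i₂ : Fin n₂, ((1 - t) * p₂ η * α₂ i₂ η) • S₂ i₂
                  = ((1 - t) * p₂ η) • ∑ i₂ : Fin n₂, α₂ i₂ η • S₂ i₂ := by
                    rw [Finset.smul_sum]; exact Finset.sum_congr rfl fun i _ => (smul_smul _ _ _).symm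
                _ = ((1 - t) * p₂ η) • η := by rw [hcmb]
        refine ⟨?_, ?_, ?_⟩
        · intro i
          refine Fin.addCases (fun i₁ => ?_) (fun i₂ => ?_) i
          · simp only [Fin.addCases_left]
            by_cases hp : p₁ η = 0
            · simp [hp]
            · exact div_nonneg (mul_nonneg (mul_nonneg ht0 (hp₁0 η))
                ((hsk₁ η (hmem1 η hp)).1 i₁).1) (hP0 η)
          · simp only [Fin.addCases_right]
            by_cases hp : p₂ η = 0
            · simp [hp]
            · exact div_nonneg (mul_nonneg (mul_nonneg (le_of_lt ht') (hp₂0 η))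
                ((hsk₂ η (hmem2 η hp)).1 i₂).1) (hP0 η)
        · rw [Fin.sum_univ_add]
          simp only [Fin.addCases_left, Fin.addCases_right]
          rw [← Finset.sum_div, ← Finset.sum_div, hs1.1, hs2.1, ← add_div,
            ← hPapp η, div_self h0]
        · rw [Fin.sum_univ_add]
          simp only [Fin.addCases_left, Fin.addCases_right, hScdef,
            Fin.append_left, Fin.append_right]
          have e1 : ∀ (x : ℝ) (v : V), (x / P η) • v = (P η)⁻¹ • (x • v) := by
            intro x v; rw [div_eq_inv_mul, mul_smul]
          simp only [e1]
          rw [← Finset.smul_sum, ← Finset.smul_sum, hs1.2, hs2.2, ← smul_add,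
            ← add_smul, ← hPapp η, ← smul_assoc, smul_eq_mul, inv_mul_cancel₀ h0, one_smul]
    refine ⟨fun i => ⟨key.1 i, ?_⟩, key.2.1, key.2.2⟩
    calc _ ≤ _ := Finset.single_le_sum (f := fun j =>
          (if h0 : P η = 0 then
            (if hη' : η ∈ convexHull ℝ (Set.range Sc) then (exists_weights Sc η hη').choose j else 0)
          else Fin.addCases (fun i₁ => t * p₁ η * α₁ i₁ η / P η)
            (fun i₂ => (1 - t) * p₂ η * α₂ i₂ η / P η) j))
          (fun j _ => key.1 j) (Finset.mem_univ i)
    _ = 1 := key.2.1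
  · -- support condition
    intro η hη
    rw [Finset.mem_coe, Finsupp.mem_support_iff] at hη
    have : p₁ η ≠ 0 ∨ p₂ η ≠ 0 := by
      by_contra h
      push_neg at h
      exact hη (by rw [hPapp, h.1, h.2]; ring)
    rcases this with h | h
    · exact hull1 (hmem1 η h)
    · exact hull2 (hmem2 η h)
  · -- c condition
    intro v
    have lhs : (t • c₁ + (1 - t) • c₂) v = t * c₁ v + (1 - t) * c₂ v := by
      simp [smul_eq_mul]
    rw [lhs, Finset.sum_filter, Fin.sum_univ_add]
    have term1 : ∀ i₁ : Fin n₁,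
        (if Sc (Fin.castAdd n₂ i₁) = v then
          ∑ η ∈ P.support, P η * (if h0 : P η = 0 then
            (if hη' : η ∈ convexHull ℝ (Set.range Sc) then (exists_weights Sc η hη').choose (Fin.castAdd n₂ i₁) else 0)
          else Fin.addCases (fun j₁ => t * p₁ η * α₁ j₁ η / P η)
            (fun j₂ => (1 - t) * p₂ η * α₂ j₂ η / P η) (Fin.castAdd n₂ i₁)) else 0)
        = (if S₁ i₁ = v then t * ∑ η ∈ p₁.support, p₁ η * α₁ i₁ η else 0) := by
      intro i₁
      rw [show Sc (Fin.castAdd n₂ i₁) = S₁ i₁ from Fin.append_left _ _ _]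
      by_cases hv : S₁ i₁ = v
      · rw [if_pos hv, if_pos hv]
        have : ∀ η ∈ P.support,
            P η * (if h0 : P η = 0 then
              (if hη' : η ∈ convexHull ℝ (Set.range Sc) then (exists_weights Sc η hη').choose (Fin.castAdd n₂ i₁) else 0)
            else Fin.addCases (fun j₁ => t * p₁ η * α₁ j₁ η / P η)
              (fun j₂ => (1 - t) * p₂ η * α₂ j₂ η / P η) (Fin.castAdd n₂ i₁))
            = t * (p₁ η * α₁ i₁ η) := by
          intro η hη
          rw [Finsupp.mem_support_iff] at hη
          rw [dif_neg hη, Fin.addCases_left, mul_div_assoc', mul_comm,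
            mul_div_assoc, div_self hη, mul_one, mul_assoc]
        rw [Finset.sum_congr rfl this, ← Finset.mul_sum]
        congr 1
        rw [Finset.sum_subset hsub1]
        intro η _ hη
        rw [Finsupp.mem_support_iff, not_not] at hη
        rw [hη, zero_mul]
      · rw [if_neg hv, if_neg hv]
    have term2 : ∀ i₂ : Fin n₂,
        (if Sc (Fin.natAdd n₁ i₂) = v then
          ∑ η ∈ P.support, P η * (if h0 : P η = 0 then
            (if hη' : η ∈ convexHull ℝ (Set.range Sc) then (exists_weights Sc η hη').choose (Fin.natAdd n₁ i₂) else 0)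
          else Fin.addCases (fun j₁ => t * p₁ η * α₁ j₁ η / P η)
            (fun j₂ => (1 - t) * p₂ η * α₂ j₂ η / P η) (Fin.natAdd n₁ i₂)) else 0)
        = (if S₂ i₂ = v then (1 - t) * ∑ η ∈ p₂.support, p₂ η * α₂ i₂ η else 0) := by
      intro i₂
      rw [show Sc (Fin.natAdd n₁ i₂) = S₂ i₂ from Fin.append_right _ _ _]
      by_cases hv : S₂ i₂ = v
      · rw [if_pos hv, if_pos hv]
        have : ∀ η ∈ P.support,
            P η * (if h0 : P η = 0 then
              (if hη' : η ∈ convexHull ℝ (Set.range Sc) then (exists_weights Sc η hη').choose (Fin.natAdd n₁ i₂) else 0)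
            else Fin.addCases (fun j₁ => t * p₁ η * α₁ j₁ η / P η)
              (fun j₂ => (1 - t) * p₂ η * α₂ j₂ η / P η) (Fin.natAdd n₁ i₂))
            = (1 - t) * (p₂ η * α₂ i₂ η) := by
          intro η hη
          rw [Finsupp.mem_support_iff] at hη
          rw [dif_neg hη, Fin.addCases_right, mul_div_assoc', mul_comm,
            mul_div_assoc, div_self hη, mul_one, mul_assoc]
        rw [Finset.sum_congr rfl this, ← Finset.mul_sum]
        congr 1
        rw [Finset.sum_subset hsub2]
        intro η _ hη
        rw [Finsupp.mem_support_iff, not_not] at hη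
        rw [hη, zero_mul]
      · rw [if_neg hv, if_neg hv]
    rw [Finset.sum_congr rfl (fun i₁ _ => term1 i₁), Finset.sum_congr rfl (fun i₂ _ => term2 i₂)]
    rw [hc₁ v, hc₂ v, Finset.sum_filter, Finset.sum_filter, Finset.mul_sum, Finset.mul_sum]
    congr 1
    · exact Finset.sum_congr rfl fun i _ => by split_ifs <;> simp
    · exact Finset.sum_congr rfl fun i _ => by split_ifs <;> simp
end

section
/- Survey commutes with the reweighted push-forward (r = 1 case): Let V, W be finite-dimensional real vector spaces, f : V → W affine with ‖f(η)‖ > 0 on the relevant supports, P a finitely-supported distribution on V, and C a survey of P on a skeleton (S, α₁,…,αₙ). Define distributions Q and D on W by P(Q = η) ∝ E[‖f(P)‖ · 1[f(P) ∝ η]] and P(D = η) ∝ E[‖f(C)‖ · 1[f(C) ∝ η]], where u ∝ v means u and v are positive scalar multiples of each other and ‖·‖ is the coordinate sum. Then D is a survey of Q. -/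
open Finset

lemma affine_comb_aux {V W : Type*} [AddCommGroup V] [Module ℝ V]
    [AddCommGroup W] [Module ℝ W] (f : V → W)
    (hf : ∀ (u v : V) (a b : ℝ), 0 ≤ a → 0 ≤ b → a + b = 1 →
      f (a • u + b • v) = a • f u + b • f v)
    {ι : Type*} [DecidableEq ι] (s : Finset ι) :
    ∀ (w : ι → ℝ) (v : ι → V), (∀ i ∈ s, 0 ≤ w i) → (∑ i ∈ s, w i = 1) →
      f (∑ i ∈ s, w i • v i) = ∑ i ∈ s, w i • f (v i) := by
  induction s using Finset.induction with
  | empty => intro w v _ h1; simp at h1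
  | @insert a s ha ih =>
    intro w v hw h1
    rw [Finset.sum_insert ha] at h1
    rw [Finset.sum_insert ha, Finset.sum_insert ha]
    have hwa : 0 ≤ w a := hw a (Finset.mem_insert_self a s)
    have hws : ∀ i ∈ s, 0 ≤ w i := fun i hi => hw i (Finset.mem_insert_of_mem hi)
    have ht0 : 0 ≤ ∑ i ∈ s, w i := Finset.sum_nonneg hws
    rcases eq_or_lt_of_le ht0 with h | h
    · have hz : ∀ i ∈ s, w i = 0 := (Finset.sum_eq_zero_iff_of_nonneg hws).mp h.symm
      have hwa1 : w a = 1 := by rw [← h1, ← h]; ring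
      have e1 : ∑ i ∈ s, w i • v i = 0 := Finset.sum_eq_zero fun i hi => by
        rw [hz i hi, zero_smul]
      have e2 : ∑ i ∈ s, w i • f (v i) = 0 := Finset.sum_eq_zero fun i hi => by
        rw [hz i hi, zero_smul]
      rw [e1, e2, hwa1]
      simp
    · set t := ∑ i ∈ s, w i with htdef
      have htne : t ≠ 0 := ne_of_gt h
      have hinner : (∑ i ∈ s, w i • v i) = t • (t⁻¹ • ∑ i ∈ s, w i • v i) := by
        rw [smul_smul, mul_inv_cancel₀ htne, one_smul]
      have hkey := hf (v a) (t⁻¹ • ∑ i ∈ s, w i • v i) (w a) t hwa ht0 h1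
      have hscale : t⁻¹ • ∑ i ∈ s, w i • v i = ∑ i ∈ s, (t⁻¹ * w i) • v i := by
        rw [Finset.smul_sum]; simp [smul_smul]
      have hIH : f (∑ i ∈ s, (t⁻¹ * w i) • v i) = ∑ i ∈ s, (t⁻¹ * w i) • f (v i) := by
        apply ih
        · intro i hi; exact mul_nonneg (inv_nonneg.mpr ht0) (hws i hi)
        · rw [← Finset.mul_sum, inv_mul_cancel₀ htne]
      rw [hinner, hkey, hscale, hIH, Finset.smul_sum]
      congr 1
      apply Finset.sum_congr rfl
      intro i hi
      rw [smul_smul, ← mul_assoc, mul_inv_cancel₀ htne, one_mul]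

/-- Surveying commutes with the reweighted push-forward (case `r = 1`): if `C`
is a survey of `P` on a skeleton `(S, α)`, `f` is affine with positive
coordinate sums, `Q` is the distribution of the normalization of `f(P)`
reweighted by `‖f(P)‖`, and `D` is the analogous distribution built from `C`,
then `D` is a survey of `Q` (on a skeleton with base set the normalized images
of the base points). -/
theorem survey_commutes_pushforward_one {V : Type*} [AddCommGroup V]
    [Module ℝ V] [FiniteDimensional ℝ V] {m n : ℕ} [DecidableEq (Fin m → ℝ)]
    (f : V → (Fin m → ℝ))
    (hf : ∀ (u v : V) (a b : ℝ), 0 ≤ a → 0 ≤ b → a + b = 1 →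
      f (a • u + b • v) = a • f u + b • f v)
    (N : (Fin m → ℝ) → ℝ) (hN : ∀ w, N w = ∑ a, w a)
    (S : Fin n → V) (α : Fin n → V → ℝ)
    (hα01 : ∀ η ∈ convexHull ℝ (Set.range S), ∀ i, α i η ∈ Set.Icc (0:ℝ) 1)
    (hαsum : ∀ η ∈ convexHull ℝ (Set.range S), ∑ i, α i η = 1)
    (hαdec : ∀ η ∈ convexHull ℝ (Set.range S), ∑ i, α i η • S i = η)
    (hpos : ∀ η ∈ convexHull ℝ (Set.range S), 0 < N (f η))
    (p : V →₀ ℝ) (hp0 : ∀ η, 0 ≤ p η) (hp1 : ∑ η ∈ p.support, p η = 1)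
    (hpsupp : (p.support : Set V) ⊆ convexHull ℝ (Set.range S))
    (c : Fin n → ℝ) (hc : ∀ i, c i = ∑ η ∈ p.support, p η * α i η)
    (Zp : ℝ) (hZp : Zp = ∑ x ∈ p.support, p x * N (f x))
    (Zc : ℝ) (hZc : Zc = ∑ i, c i * N (f (S i)))
    (q : (Fin m → ℝ) → ℝ)
    (hq : ∀ η, q η = (∑ x ∈ p.support,
      p x * N (f x) * (if (N (f x))⁻¹ • f x = η then 1 else 0)) / Zp)
    (d : (Fin m → ℝ) → ℝ)
    (hd : ∀ η, d η = (∑ i, c i * N (f (S i)) *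
      (if (N (f (S i)))⁻¹ • f (S i) = η then 1 else 0)) / Zc)
    (Qsupp : Finset (Fin m → ℝ))
    (hQsupp : Qsupp = p.support.image fun x => (N (f x))⁻¹ • f x) :
    ∃ (k : ℕ) (T : Fin k → (Fin m → ℝ)) (γ : Fin k → (Fin m → ℝ) → ℝ),
      (∀ i, ∃ j, T i = (N (f (S j)))⁻¹ • f (S j)) ∧
      (∀ η ∈ (Qsupp : Set (Fin m → ℝ)),
        (∀ i, γ i η ∈ Set.Icc (0:ℝ) 1) ∧
        (∑ i, γ i η = 1) ∧ (∑ i, γ i η • T i = η)) ∧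
      (∀ v, d v = ∑ i ∈ Finset.univ.filter (fun i => T i = v),
        ∑ η ∈ Qsupp, q η * γ i η) := by
  classical
  have hSmem : ∀ i, S i ∈ convexHull ℝ (Set.range S) := fun i =>
    subset_convexHull ℝ _ ⟨i, rfl⟩
  have hNS : ∀ i, 0 < N (f (S i)) := fun i => hpos _ (hSmem i)
  have hxmem : ∀ x ∈ p.support, x ∈ convexHull ℝ (Set.range S) := fun x hx => hpsupp hx
  have hpx : ∀ x ∈ p.support, 0 < p x := fun x hx =>
    lt_of_le_of_ne (hp0 x) (Ne.symm (Finsupp.mem_support_iff.mp hx))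
  have hNx : ∀ x ∈ p.support, 0 < N (f x) := fun x hx => hpos _ (hxmem x hx)
  have hfc : ∀ x ∈ convexHull ℝ (Set.range S), f x = ∑ i, α i x • f (S i) := by
    intro x hx
    have h := affine_comb_aux f hf Finset.univ (fun i => α i x) S
      (fun i _ => (hα01 x hx i).1) (hαsum x hx)
    rwa [hαdec x hx] at h
  have hNlin : ∀ (t : Fin n → ℝ) (g : Fin n → (Fin m → ℝ)),
      N (∑ i, t i • g i) = ∑ i, t i * N (g i) := by
    intro t g
    simp only [hN, Finset.sum_apply, Pi.smul_apply, smul_eq_mul, Finset.mul_sum]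
    exact Finset.sum_comm
  have hNfx : ∀ x ∈ convexHull ℝ (Set.range S), N (f x) = ∑ i, α i x * N (f (S i)) := by
    intro x hx; rw [hfc x hx, hNlin]
  have hZpc : Zp = Zc := by
    rw [hZp, hZc]
    simp only [hc, Finset.sum_mul]
    rw [Finset.sum_comm]
    apply Finset.sum_congr rfl
    intro x hx
    rw [hNfx x (hxmem x hx), Finset.mul_sum]
    simp [mul_assoc]
  set Wf : (Fin m → ℝ) → ℝ := fun η => ∑ x ∈ p.support,
    p x * N (f x) * (if (N (f x))⁻¹ • f x = η then 1 else 0) with hWdef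
  set A : Fin n → (Fin m → ℝ) → ℝ := fun i η => ∑ x ∈ p.support,
    p x * α i x * N (f (S i)) * (if (N (f x))⁻¹ • f x = η then 1 else 0) with hAdef
  have hAnn : ∀ i η, 0 ≤ A i η := by
    intro i η
    apply Finset.sum_nonneg
    intro x hx
    have h1 := hp0 x
    have h2 := (hα01 x (hxmem x hx) i).1
    have h3 := (hNS i).le
    have h4 : (0:ℝ) ≤ (if (N (f x))⁻¹ • f x = η then 1 else 0) := by
      split_ifs <;> norm_num
    exact mul_nonneg (mul_nonneg (mul_nonneg h1 h2) h3) h4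
  have hAsum : ∀ η, ∑ i, A i η = Wf η := by
    intro η
    rw [hAdef, hWdef]
    simp only
    rw [Finset.sum_comm]
    apply Finset.sum_congr rfl
    intro x hx
    rw [← Finset.sum_mul, hNfx x (hxmem x hx), Finset.sum_mul, ← Finset.sum_mul,
      Finset.mul_sum]
    congr 1
    apply Finset.sum_congr rfl
    intro i _
    ring
  have hWpos : ∀ η ∈ Qsupp, 0 < Wf η := by
    intro η hη
    rw [hQsupp] at hη
    obtain ⟨x0, hx0, hx0η⟩ := Finset.mem_image.mp hη
    have hterm : (0:ℝ) < p x0 * N (f x0) * (if (N (f x0))⁻¹ • f x0 = η then 1 else 0) := by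
      rw [if_pos hx0η, mul_one]
      exact mul_pos (hpx x0 hx0) (hNx x0 hx0)
    apply lt_of_lt_of_le hterm
    apply Finset.single_le_sum (f := fun x =>
      p x * N (f x) * (if (N (f x))⁻¹ • f x = η then 1 else 0)) _ hx0
    intro x hx
    have h1 := (hp0 x)
    have h2 := (hNx x hx).le
    positivity
  refine ⟨n, fun j => (N (f (S j)))⁻¹ • f (S j), fun i η => A i η / Wf η,
    fun i => ⟨i, rfl⟩, ?_, ?_⟩
  · intro η hη
    have hη' : η ∈ Qsupp := hη
    have hW := hWpos η hη'
    have hWne : Wf η ≠ 0 := ne_of_gt hW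
    refine ⟨?_, ?_, ?_⟩
    · intro i
      constructor
      · exact div_nonneg (hAnn i η) hW.le
      · rw [div_le_one hW, ← hAsum η]
        exact Finset.single_le_sum (fun j _ => hAnn j η) (Finset.mem_univ i)
    · rw [← Finset.sum_div, hAsum η, div_self hWne]
    · have key : ∑ i, A i η • ((N (f (S i)))⁻¹ • f (S i)) = Wf η • η := by
        simp only [hAdef, Finset.sum_smul]
        rw [Finset.sum_comm, hWdef]
        simp only
        rw [Finset.sum_smul]
        apply Finset.sum_congr rfl
        intro x hx
        by_cases hxη : (N (f x))⁻¹ • f x = η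
        · simp only [if_pos hxη, mul_one]
          have hfx : f x = N (f x) • η := by
            rw [← hxη, smul_smul, mul_inv_cancel₀ (ne_of_gt (hNx x hx)), one_smul]
          have e : ∀ i, (p x * α i x * N (f (S i))) • ((N (f (S i)))⁻¹ • f (S i))
              = p x • (α i x • f (S i)) := by
            intro i
            rw [smul_smul, smul_smul]
            congr 1
            rw [mul_assoc, mul_inv_cancel₀ (ne_of_gt (hNS i)), mul_one]
          simp only [e]
          rw [← Finset.smul_sum, ← hfc x (hxmem x hx)]
          conv_lhs => rw [hfx]
          rw [smul_smul]
        · simp only [if_neg hxη, mul_zero, zero_smul, Finset.sum_const_zero]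
      calc ∑ i, (A i η / Wf η) • ((N (f (S i)))⁻¹ • f (S i))
          = (Wf η)⁻¹ • ∑ i, A i η • ((N (f (S i)))⁻¹ • f (S i)) := by
            rw [Finset.smul_sum]
            apply Finset.sum_congr rfl
            intro i _
            simp [smul_smul, div_eq_inv_mul, mul_assoc]
        _ = η := by rw [key, smul_smul, inv_mul_cancel₀ hWne, one_smul]
  · intro v
    have hterm : ∀ i : Fin n, ∑ η ∈ Qsupp, q η * (A i η / Wf η)
        = c i * N (f (S i)) / Zp := by
      intro i
      have step : ∀ η ∈ Qsupp, q η * (A i η / Wf η) = A i η / Zp := by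
        intro η hη
        have hWne : Wf η ≠ 0 := ne_of_gt (hWpos η hη)
        rw [hq η]
        have : (∑ x ∈ p.support,
            p x * N (f x) * (if (N (f x))⁻¹ • f x = η then 1 else 0)) = Wf η := rfl
        rw [this, div_mul_div_comm, mul_comm Zp (Wf η), mul_div_mul_left _ _ hWne]
      rw [Finset.sum_congr rfl step, ← Finset.sum_div]
      congr 1
      simp only [hAdef]
      rw [Finset.sum_comm]
      have step2 : ∀ x ∈ p.support, ∑ η ∈ Qsupp,
          p x * α i x * N (f (S i)) * (if (N (f x))⁻¹ • f x = η then 1 else 0)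
          = p x * α i x * N (f (S i)) := by
        intro x hx
        have hmem : (N (f x))⁻¹ • f x ∈ Qsupp := by
          rw [hQsupp]; exact Finset.mem_image_of_mem _ hx
        simp only [mul_ite, mul_one, mul_zero]
        rw [Finset.sum_ite_eq Qsupp ((N (f x))⁻¹ • f x)
          (fun _ => p x * α i x * N (f (S i))), if_pos hmem]
      rw [Finset.sum_congr rfl step2, hc i, Finset.sum_mul]
    rw [Finset.sum_congr rfl (fun i _ => hterm i), hd v, ← hZpc, Finset.sum_div,
      Finset.sum_filter]
    apply Finset.sum_congr rfl
    intro i _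
    by_cases h : (N (f (S i)))⁻¹ • f (S i) = v
    · rw [if_pos h, if_pos h, mul_one]
    · rw [if_neg h, if_neg h, mul_zero, zero_div]
end

section
/- Survey commutes with the reweighted push-forward (general r): Let f : V₁ × ⋯ × V_r → V be multi-affine with positive coordinate sums on the relevant supports. Let P₁,…,P_r be independent finitely-supported distributions on V₁,…,V_r and C₁,…,C_r their respective (independent) surveys. Define Q by P(Q = η) ∝ E[‖f(P₁,…,P_r)‖ · 1[f(P₁,…,P_r) ∝ η]] and D by P(D = η) ∝ E[‖f(C₁,…,C_r)‖ · 1[f(C₁,…,C_r) ∝ η]]. Then D is a survey of Q. -/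
open Finset

theorem aux_slot {r m : ℕ}
    (V : Fin r → Type*) [∀ i, AddCommGroup (V i)] [∀ i, Module ℝ (V i)]
    (f : (∀ i, V i) → (Fin m → ℝ))
    (hf : ∀ (i : Fin r) (x : ∀ i, V i) (u v : V i) (a b : ℝ),
      0 ≤ a → 0 ≤ b → a + b = 1 →
      f (Function.update x i (a • u + b • v)) =
        a • f (Function.update x i u) + b • f (Function.update x i v))
    (i : Fin r) {ι : Type*} [DecidableEq ι] (t : Finset ι) :
    ∀ (w : ι → ℝ) (u : ι → V i), (∀ j ∈ t, 0 ≤ w j) → (∑ j ∈ t, w j = 1) →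
    ∀ x, f (Function.update x i (∑ j ∈ t, w j • u j)) =
      ∑ j ∈ t, w j • f (Function.update x i (u j)) := by
  induction t using Finset.cons_induction_on with
  | empty => intro w u h0 h1; simp at h1
  | @cons a s ha ih =>
    intro w u h0 h1 x
    rw [Finset.sum_cons] at h1 ⊢
    rw [Finset.sum_cons]
    set b := ∑ j ∈ s, w j with hb
    have hwa : 0 ≤ w a := h0 a (Finset.mem_cons_self a s)
    have hbnn : 0 ≤ b := Finset.sum_nonneg fun j hj => h0 j (Finset.mem_cons_of_mem hj)
    rcases eq_or_lt_of_le hbnn with hb0 | hbpos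
    · have hz : ∀ j ∈ s, w j = 0 := by
        intro j hj
        have := (Finset.sum_eq_zero_iff_of_nonneg
          (fun j hj => h0 j (Finset.mem_cons_of_mem hj))).mp hb0.symm
        exact this j hj
      have hwa1 : w a = 1 := by linarith [hb0]
      have hsum0 : ∑ j ∈ s, w j • u j = 0 :=
        Finset.sum_eq_zero fun j hj => by rw [hz j hj, zero_smul]
      rw [hsum0, hwa1, one_smul, add_zero]
      rw [Finset.sum_eq_zero (fun j hj => by rw [hz j hj, zero_smul]), add_zero, one_smul]
    · have hbne : b ≠ 0 := ne_of_gt hbpos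
      have hrw : ∑ j ∈ s, w j • u j = b • ∑ j ∈ s, (w j / b) • u j := by
        rw [Finset.smul_sum]
        refine Finset.sum_congr rfl fun j hj => ?_
        rw [smul_smul, mul_div_cancel₀ _ hbne]
      rw [hrw, hf i x (u a) _ (w a) b hwa hbnn h1,
        ih (fun j => w j / b) u (fun j hj => div_nonneg (h0 j (Finset.mem_cons_of_mem hj)) hbnn)
          (by rw [← Finset.sum_div, ← hb, div_self hbne]) x]
      rw [Finset.smul_sum]
      congr 1
      refine Finset.sum_congr rfl fun j hj => ?_
      rw [smul_smul, mul_div_cancel₀ _ hbne]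

theorem aux_expand {r m : ℕ}
    (V : Fin r → Type*) [∀ i, AddCommGroup (V i)] [∀ i, Module ℝ (V i)]
    (f : (∀ i, V i) → (Fin m → ℝ))
    (hf : ∀ (i : Fin r) (x : ∀ i, V i) (u v : V i) (a b : ℝ),
      0 ≤ a → 0 ≤ b → a + b = 1 →
      f (Function.update x i (a • u + b • v)) =
        a • f (Function.update x i u) + b • f (Function.update x i v))
    (n : Fin r → ℕ) (S : ∀ i, Fin (n i) → V i) (α : ∀ i, Fin (n i) → V i → ℝ)
    (hα01 : ∀ i, ∀ η ∈ convexHull ℝ (Set.range (S i)),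
      ∀ j, α i j η ∈ Set.Icc (0:ℝ) 1)
    (hαsum : ∀ i, ∀ η ∈ convexHull ℝ (Set.range (S i)), ∑ j, α i j η = 1)
    (hαdec : ∀ i, ∀ η ∈ convexHull ℝ (Set.range (S i)),
      ∑ j, α i j η • S i j = η)
    (t : Finset (Fin r)) :
    ∀ (x : ∀ i, V i), (∀ i, x i ∈ convexHull ℝ (Set.range (S i))) →
    ∀ (g : ∀ i, Fin (n i)),
    f (fun i => if i ∈ t then x i else S i (g i)) =
      ∑ h : ∀ i, Fin (n i),
        (∏ i, if i ∈ t then α i (h i) (x i) else if h i = g i then (1:ℝ) else 0) •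
          f (fun i => S i (h i)) := by
  induction t using Finset.induction_on with
  | empty =>
    intro x hx g
    simp only [Finset.notMem_empty, if_false]
    have hW : ∀ h : ∀ i, Fin (n i),
        (∏ i, if h i = g i then (1:ℝ) else 0) = if h = g then 1 else 0 := by
      intro h
      rw [Finset.prod_boole]
      congr 1
      simp [funext_iff]
    rw [Finset.sum_congr rfl (fun h _ => by rw [hW h])]
    simp
  | @insert i₀ t hi₀ ih =>
    intro x hx g
    set z : ∀ i, V i := fun i => if i ∈ t then x i else S i (g i) with hz
    have hlhs : (fun i => if i ∈ insert i₀ t then x i else S i (g i)) =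
        Function.update z i₀ (x i₀) := by
      funext i
      rcases eq_or_ne i i₀ with rfl | hne
      · simp [Function.update, hz]
      · simp [Function.update, hne, hz, Finset.mem_insert, hne]
    rw [hlhs, ← hαdec i₀ _ (hx i₀),
      aux_slot V f hf i₀ Finset.univ (fun j => α i₀ j (x i₀)) (S i₀)
        (fun j _ => (hα01 i₀ _ (hx i₀) j).1) (hαsum i₀ _ (hx i₀)) z]
    have hupd : ∀ j : Fin (n i₀), Function.update z i₀ (S i₀ j) =
        fun i => if i ∈ t then x i else S i (Function.update g i₀ j i) := by
      intro j
      funext i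
      rcases eq_or_ne i i₀ with rfl | hne
      · simp [Function.update, hz, hi₀]
      · simp [Function.update, hne, hz]
    calc ∑ j, α i₀ j (x i₀) • f (Function.update z i₀ (S i₀ j))
        = ∑ j, α i₀ j (x i₀) • ∑ h : ∀ i, Fin (n i),
            (∏ i, if i ∈ t then α i (h i) (x i)
              else if h i = Function.update g i₀ j i then (1:ℝ) else 0) •
            f (fun i => S i (h i)) := by
          refine Finset.sum_congr rfl fun j _ => ?_
          rw [hupd j, ih x hx (Function.update g i₀ j)]
      _ = ∑ h : ∀ i, Fin (n i), (∑ j, α i₀ j (x i₀) *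
            ∏ i, if i ∈ t then α i (h i) (x i)
              else if h i = Function.update g i₀ j i then (1:ℝ) else 0) •
            f (fun i => S i (h i)) := by
          simp_rw [Finset.smul_sum, smul_smul]
          rw [Finset.sum_comm]
          simp_rw [Finset.sum_smul]
      _ = _ := by
          refine Finset.sum_congr rfl fun h _ => ?_
          congr 1
          set P : ℝ := ∏ i ∈ Finset.univ.erase i₀,
            (if i ∈ t then α i (h i) (x i) else if h i = g i then (1:ℝ) else 0) with hP
          have h1 : ∀ j : Fin (n i₀),
              (∏ i, if i ∈ t then α i (h i) (x i)
                else if h i = Function.update g i₀ j i then (1:ℝ) else 0) =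
              (if h i₀ = j then (1:ℝ) else 0) * P := by
            intro j
            rw [← Finset.mul_prod_erase Finset.univ _ (Finset.mem_univ i₀)]
            congr 1
            · simp [hi₀, Function.update]
            · refine Finset.prod_congr rfl fun i hi => ?_
              have hne : i ≠ i₀ := (Finset.mem_erase.mp hi).1
              simp [Function.update, hne]
          have h2 :
              (∏ i, if i ∈ insert i₀ t then α i (h i) (x i)
                else if h i = g i then (1:ℝ) else 0) =
              α i₀ (h i₀) (x i₀) * P := by
            rw [← Finset.mul_prod_erase Finset.univ _ (Finset.mem_univ i₀)]
            congr 1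
            · simp
            · refine Finset.prod_congr rfl fun i hi => ?_
              have hne : i ≠ i₀ := (Finset.mem_erase.mp hi).1
              simp [Finset.mem_insert, hne]
          simp_rw [h1]
          rw [h2]
          simp [mul_ite, Finset.sum_ite_eq]

/-- Surveying commutes with the reweighted push-forward (general `r`): if
`C₁,…,C_r` are (independent) surveys of independent `P₁,…,P_r`, `f` is
multi-affine with positive coordinate sums, `Q` is the distribution of the
normalization of `f(P₁,…,P_r)` reweighted by `‖f(P₁,…,P_r)‖`, and `D` is the
analogous distribution built from the surveys, then `D` is a survey of `Q`. -/
theorem survey_commutes_pushforward {r m : ℕ} [DecidableEq (Fin m → ℝ)]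
    (V : Fin r → Type*) [∀ i, AddCommGroup (V i)] [∀ i, Module ℝ (V i)]
    [∀ i, DecidableEq (V i)]
    (f : (∀ i, V i) → (Fin m → ℝ))
    (hf : ∀ (i : Fin r) (x : ∀ i, V i) (u v : V i) (a b : ℝ),
      0 ≤ a → 0 ≤ b → a + b = 1 →
      f (Function.update x i (a • u + b • v)) =
        a • f (Function.update x i u) + b • f (Function.update x i v))
    (N : (Fin m → ℝ) → ℝ) (hN : ∀ w, N w = ∑ a, w a)
    (n : Fin r → ℕ) (S : ∀ i, Fin (n i) → V i) (α : ∀ i, Fin (n i) → V i → ℝ)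
    (hα01 : ∀ i, ∀ η ∈ convexHull ℝ (Set.range (S i)),
      ∀ j, α i j η ∈ Set.Icc (0:ℝ) 1)
    (hαsum : ∀ i, ∀ η ∈ convexHull ℝ (Set.range (S i)), ∑ j, α i j η = 1)
    (hαdec : ∀ i, ∀ η ∈ convexHull ℝ (Set.range (S i)),
      ∑ j, α i j η • S i j = η)
    (hpos : ∀ x : ∀ i, V i,
      (∀ i, x i ∈ convexHull ℝ (Set.range (S i))) → 0 < N (f x))
    (p : ∀ i, V i →₀ ℝ) (hp0 : ∀ i η, 0 ≤ p i η)
    (hp1 : ∀ i, ∑ η ∈ (p i).support, p i η = 1)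
    (hpsupp : ∀ i, ((p i).support : Set (V i)) ⊆ convexHull ℝ (Set.range (S i)))
    (c : ∀ i, Fin (n i) → ℝ)
    (hc : ∀ i j, c i j = ∑ η ∈ (p i).support, p i η * α i j η)
    (Zp : ℝ) (hZp : Zp = ∑ x ∈ Fintype.piFinset (fun i => (p i).support),
      (∏ i, p i (x i)) * N (f x))
    (Zc : ℝ) (hZc : Zc = ∑ j : ∀ i, Fin (n i),
      (∏ i, c i (j i)) * N (f (fun i => S i (j i))))
    (q : (Fin m → ℝ) → ℝ)
    (hq : ∀ η, q η = (∑ x ∈ Fintype.piFinset (fun i => (p i).support),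
      (∏ i, p i (x i)) * N (f x) * (if (N (f x))⁻¹ • f x = η then 1 else 0)) / Zp)
    (d : (Fin m → ℝ) → ℝ)
    (hd : ∀ η, d η = (∑ j : ∀ i, Fin (n i),
      (∏ i, c i (j i)) * N (f (fun i => S i (j i))) *
      (if (N (f (fun i => S i (j i))))⁻¹ • f (fun i => S i (j i)) = η
        then 1 else 0)) / Zc)
    (Qsupp : Finset (Fin m → ℝ))
    (hQsupp : Qsupp = (Fintype.piFinset (fun i => (p i).support)).image
      fun x => (N (f x))⁻¹ • f x) :
    ∃ (k : ℕ) (T : Fin k → (Fin m → ℝ)) (γ : Fin k → (Fin m → ℝ) → ℝ),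
      (∀ i, ∃ j : ∀ i, Fin (n i),
        T i = (N (f (fun i => S i (j i))))⁻¹ • f (fun i => S i (j i))) ∧
      (∀ η ∈ (Qsupp : Set (Fin m → ℝ)),
        (∀ i, γ i η ∈ Set.Icc (0:ℝ) 1) ∧
        (∑ i, γ i η = 1) ∧ (∑ i, γ i η • T i = η)) ∧
      (∀ v, d v = ∑ i ∈ Finset.univ.filter (fun i => T i = v),
        ∑ η ∈ Qsupp, q η * γ i η) := by
  classical
  have hsupp_ne : ∀ i, ((p i).support).Nonempty := by
    intro i
    by_contra h
    rw [Finset.not_nonempty_iff_eq_empty] at h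
    have := hp1 i
    rw [h] at this
    simp at this
  have hJne : ∀ i, Nonempty (Fin (n i)) := by
    intro i
    obtain ⟨η, hη⟩ := hsupp_ne i
    have hmem := hpsupp i (Finset.mem_coe.mpr hη)
    rcases Set.eq_empty_or_nonempty (Set.range (S i)) with he | hne
    · rw [he] at hmem; simp [convexHull_empty] at hmem
    · obtain ⟨v, j, _⟩ := hne; exact ⟨j⟩
  haveI : ∀ i, Nonempty (Fin (n i)) := hJne
  set X := Fintype.piFinset (fun i => (p i).support) with hX
  have hxhull : ∀ x ∈ X, ∀ i, x i ∈ convexHull ℝ (Set.range (S i)) := by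
    intro x hx i
    exact hpsupp i (Finset.mem_coe.mpr ((Fintype.mem_piFinset).mp hx i))
  have hShull : ∀ (j : ∀ i, Fin (n i)) (i : Fin r),
      S i (j i) ∈ convexHull ℝ (Set.range (S i)) :=
    fun j i => subset_convexHull ℝ _ ⟨j i, rfl⟩
  have hNjpos : ∀ j : ∀ i, Fin (n i), 0 < N (f (fun i => S i (j i))) :=
    fun j => hpos _ (hShull j)
  have hNxpos : ∀ x ∈ X, 0 < N (f x) := fun x hx => hpos x (hxhull x hx)
  have hppos : ∀ x ∈ X, 0 < ∏ i, p i (x i) := by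
    intro x hx
    refine Finset.prod_pos fun i _ => ?_
    have hmem := (Fintype.mem_piFinset).mp hx i
    exact lt_of_le_of_ne (hp0 i (x i)) (Ne.symm (Finsupp.mem_support_iff.mp hmem))
  have hαnn : ∀ x ∈ X, ∀ (i : Fin r) (jj : Fin (n i)), 0 ≤ α i jj (x i) :=
    fun x hx i jj => (hα01 i _ (hxhull x hx i) jj).1
  have hexp : ∀ x ∈ X, f x = ∑ j : ∀ i, Fin (n i),
      (∏ i, α i (j i) (x i)) • f (fun i => S i (j i)) := by
    intro x hx
    have := aux_expand V f hf n S α hα01 hαsum hαdec Finset.univ x (hxhull x hx)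
      (Classical.arbitrary _)
    simpa using this
  have hNlin : ∀ {ι : Type} (t : Finset ι) (w : ι → ℝ) (v : ι → Fin m → ℝ),
      N (∑ j ∈ t, w j • v j) = ∑ j ∈ t, w j * N (v j) := by
    intro ι t w v
    simp only [hN, Finset.sum_apply, Pi.smul_apply, smul_eq_mul, Finset.mul_sum]
    rw [Finset.sum_comm]
  have hNexp : ∀ x ∈ X, N (f x) = ∑ j : ∀ i, Fin (n i),
      (∏ i, α i (j i) (x i)) * N (f (fun i => S i (j i))) := by
    intro x hx
    rw [hexp x hx, hNlin]
  have hcprod : ∀ j : ∀ i, Fin (n i),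
      ∏ i, c i (j i) = ∑ x ∈ X, (∏ i, p i (x i)) * ∏ i, α i (j i) (x i) := by
    intro j
    have h1 : ∏ i, c i (j i) = ∏ i, ∑ η ∈ (p i).support, p i η * α i (j i) η :=
      Finset.prod_congr rfl fun i _ => hc i (j i)
    rw [h1, Finset.prod_univ_sum]
    exact Finset.sum_congr rfl fun x _ => Finset.prod_mul_distrib
  have hZeq : Zc = Zp := by
    rw [hZc, hZp]
    calc ∑ j : ∀ i, Fin (n i), (∏ i, c i (j i)) * N (f (fun i => S i (j i)))
        = ∑ j : ∀ i, Fin (n i), ∑ x ∈ X,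
            ((∏ i, p i (x i)) * ∏ i, α i (j i) (x i)) * N (f (fun i => S i (j i))) := by
          refine Finset.sum_congr rfl fun j _ => ?_
          rw [hcprod j, Finset.sum_mul]
      _ = ∑ x ∈ X, ∑ j : ∀ i, Fin (n i),
            ((∏ i, p i (x i)) * ∏ i, α i (j i) (x i)) * N (f (fun i => S i (j i))) :=
          Finset.sum_comm
      _ = ∑ x ∈ X, (∏ i, p i (x i)) * N (f x) := by
          refine Finset.sum_congr rfl fun x hx => ?_
          rw [hNexp x hx, Finset.mul_sum]
          exact Finset.sum_congr rfl fun j _ => by ring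
  have hZppos : 0 < Zp := by
    rw [hZp]
    have hx0 : (fun i => (hsupp_ne i).choose) ∈ X :=
      (Fintype.mem_piFinset).mpr fun i => (hsupp_ne i).choose_spec
    refine Finset.sum_pos' (fun x hx => ?_) ⟨_, hx0, ?_⟩
    · exact mul_nonneg (le_of_lt (hppos x hx)) (le_of_lt (hNxpos x hx))
    · exact mul_pos (hppos _ hx0) (hNxpos _ hx0)
  set A : (Fin m → ℝ) → ℝ := fun η => ∑ x ∈ X,
    (∏ i, p i (x i)) * N (f x) * (if (N (f x))⁻¹ • f x = η then 1 else 0) with hAdef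
  set B : (∀ i, Fin (n i)) → (Fin m → ℝ) → ℝ := fun j η => ∑ x ∈ X,
    (∏ i, p i (x i)) * (∏ i, α i (j i) (x i)) * N (f (fun i => S i (j i))) *
      (if (N (f x))⁻¹ • f x = η then 1 else 0) with hBdef
  have hqA : ∀ η, q η = A η / Zp := by
    intro η
    rw [hq η]
  have hBnn : ∀ j η, 0 ≤ B j η := by
    intro j η
    simp only [hBdef]
    refine Finset.sum_nonneg fun x hx => ?_
    have h1 : (0:ℝ) ≤ ∏ i, α i (j i) (x i) :=
      Finset.prod_nonneg fun i _ => hαnn x hx i (j i)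
    have h2 : (0:ℝ) ≤ if (N (f x))⁻¹ • f x = η then 1 else 0 := by positivity
    exact mul_nonneg (mul_nonneg (mul_nonneg (le_of_lt (hppos x hx)) h1)
      (le_of_lt (hNjpos j))) h2
  have hBsum : ∀ η, ∑ j : ∀ i, Fin (n i), B j η = A η := by
    intro η
    simp only [hBdef, hAdef]
    rw [Finset.sum_comm]
    refine Finset.sum_congr rfl fun x hx => ?_
    rw [← Finset.sum_mul]
    congr 1
    rw [hNexp x hx, Finset.mul_sum]
    exact Finset.sum_congr rfl fun j _ => by ring
  have hApos : ∀ η ∈ Qsupp, 0 < A η := by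
    intro η hη
    rw [hQsupp] at hη
    obtain ⟨x0, hx0, hx0η⟩ := Finset.mem_image.mp hη
    simp only [hAdef]
    refine Finset.sum_pos' (fun x hx => ?_) ⟨x0, hx0, ?_⟩
    · have h2 : (0:ℝ) ≤ if (N (f x))⁻¹ • f x = η then 1 else 0 := by positivity
      exact mul_nonneg (mul_nonneg (le_of_lt (hppos x hx)) (le_of_lt (hNxpos x hx))) h2
    · rw [if_pos hx0η, mul_one]
      exact mul_pos (hppos _ hx0) (hNxpos _ hx0)
  have hBT : ∀ η ∈ Qsupp, ∑ j : ∀ i, Fin (n i),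
      B j η • ((N (f (fun i => S i (j i))))⁻¹ • f (fun i => S i (j i))) = A η • η := by
    intro η hη
    simp only [hBdef, hAdef]
    calc ∑ j : ∀ i, Fin (n i), (∑ x ∈ X, (∏ i, p i (x i)) * (∏ i, α i (j i) (x i)) *
          N (f (fun i => S i (j i))) * (if (N (f x))⁻¹ • f x = η then 1 else 0)) •
          ((N (f (fun i => S i (j i))))⁻¹ • f (fun i => S i (j i)))
        = ∑ j : ∀ i, Fin (n i), ∑ x ∈ X,
            ((∏ i, p i (x i)) * (∏ i, α i (j i) (x i)) *
              (if (N (f x))⁻¹ • f x = η then 1 else 0)) • f (fun i => S i (j i)) := by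
          refine Finset.sum_congr rfl fun j _ => ?_
          rw [Finset.sum_smul]
          refine Finset.sum_congr rfl fun x hx => ?_
          rw [smul_smul]
          congr 1
          have hne : N (f (fun i => S i (j i))) ≠ 0 := (hNjpos j).ne'
          field_simp
      _ = ∑ x ∈ X, ∑ j : ∀ i, Fin (n i),
            ((∏ i, p i (x i)) * (∏ i, α i (j i) (x i)) *
              (if (N (f x))⁻¹ • f x = η then 1 else 0)) • f (fun i => S i (j i)) :=
          Finset.sum_comm
      _ = ∑ x ∈ X, ((∏ i, p i (x i)) * N (f x) *
            (if (N (f x))⁻¹ • f x = η then 1 else 0)) • η := by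
          refine Finset.sum_congr rfl fun x hx => ?_
          by_cases hxe : (N (f x))⁻¹ • f x = η
          · simp only [if_pos hxe, mul_one]
            have hfx : N (f x) • η = f x := by
              rw [← hxe, smul_smul, mul_inv_cancel₀ (hNxpos x hx).ne', one_smul]
            calc ∑ j : ∀ i, Fin (n i),
                  ((∏ i, p i (x i)) * (∏ i, α i (j i) (x i))) • f (fun i => S i (j i))
                = (∏ i, p i (x i)) • f x := by
                  rw [hexp x hx, Finset.smul_sum]
                  exact Finset.sum_congr rfl fun j _ => by rw [smul_smul]
              _ = ((∏ i, p i (x i)) * N (f x)) • η := by rw [mul_smul, hfx]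
          · simp only [if_neg hxe, mul_zero, zero_smul, Finset.sum_const_zero]
      _ = (∑ x ∈ X, (∏ i, p i (x i)) * N (f x) *
            (if (N (f x))⁻¹ • f x = η then 1 else 0)) • η := by
          rw [Finset.sum_smul]
  have hQB : ∀ j : ∀ i, Fin (n i), ∑ η ∈ Qsupp, B j η =
      (∏ i, c i (j i)) * N (f (fun i => S i (j i))) := by
    intro j
    simp only [hBdef]
    rw [Finset.sum_comm]
    have hind : ∀ x ∈ X, ∑ η ∈ Qsupp,
        (if (N (f x))⁻¹ • f x = η then (1:ℝ) else 0) = 1 := by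
      intro x hx
      rw [Finset.sum_ite_eq Qsupp ((N (f x))⁻¹ • f x) (fun _ => (1:ℝ)), if_pos]
      rw [hQsupp]
      exact Finset.mem_image_of_mem _ hx
    calc ∑ x ∈ X, ∑ η ∈ Qsupp, (∏ i, p i (x i)) * (∏ i, α i (j i) (x i)) *
          N (f (fun i => S i (j i))) * (if (N (f x))⁻¹ • f x = η then 1 else 0)
        = ∑ x ∈ X, (∏ i, p i (x i)) * (∏ i, α i (j i) (x i)) *
            N (f (fun i => S i (j i))) := by
          refine Finset.sum_congr rfl fun x hx => ?_
          rw [← Finset.mul_sum, hind x hx, mul_one]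
      _ = (∏ i, c i (j i)) * N (f (fun i => S i (j i))) := by
          rw [hcprod j, Finset.sum_mul]
  haveI : Nonempty (∀ i, Fin (n i)) := ⟨fun i => (hJne i).some⟩
  let e : Fin (Fintype.card (∀ i, Fin (n i))) ≃ (∀ i, Fin (n i)) :=
    (Fintype.equivFin _).symm
  refine ⟨Fintype.card (∀ i, Fin (n i)),
    fun i => (N (f (fun l => S l (e i l))))⁻¹ • f (fun l => S l (e i l)),
    fun i η => B (e i) η / A η, fun i => ⟨e i, rfl⟩, ?_, ?_⟩
  · intro η hη
    have hη' : η ∈ Qsupp := hη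
    have hA0 := hApos η hη'
    refine ⟨fun i => ⟨div_nonneg (hBnn _ _) (le_of_lt hA0), ?_⟩, ?_, ?_⟩
    · rw [div_le_one hA0, ← hBsum η]
      exact Finset.single_le_sum (fun j _ => hBnn j η) (Finset.mem_univ (e i))
    · rw [← Finset.sum_div]
      rw [Fintype.sum_equiv e (fun i => B (e i) η) (fun j => B j η) (fun i => rfl)]
      rw [hBsum η, div_self (ne_of_gt hA0)]
    · have hre : ∑ i, (B (e i) η / A η) •
          ((N (f (fun l => S l (e i l))))⁻¹ • f (fun l => S l (e i l))) =
          ∑ j : ∀ i, Fin (n i), (B j η / A η) •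
          ((N (f (fun l => S l (j l))))⁻¹ • f (fun l => S l (j l))) :=
        Fintype.sum_equiv e _ _ (fun i => rfl)
      rw [hre]
      have h2 : ∑ j : ∀ i, Fin (n i), (B j η / A η) •
          ((N (f (fun l => S l (j l))))⁻¹ • f (fun l => S l (j l))) =
          (A η)⁻¹ • ∑ j : ∀ i, Fin (n i), B j η •
          ((N (f (fun l => S l (j l))))⁻¹ • f (fun l => S l (j l))) := by
        rw [Finset.smul_sum]
        refine Finset.sum_congr rfl fun j _ => ?_
        rw [div_eq_inv_mul, mul_smul]
      rw [h2, hBT η hη', smul_smul, inv_mul_cancel₀ (ne_of_gt hA0), one_smul]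
  · intro v
    have hterm : ∀ i, ∑ η ∈ Qsupp, q η * (B (e i) η / A η) =
        (∏ l, c l (e i l)) * N (f (fun l => S l (e i l))) / Zp := by
      intro i
      have h1 : ∀ η ∈ Qsupp, q η * (B (e i) η / A η) = B (e i) η / Zp := by
        intro η hη
        rw [hqA η]
        have hAne : A η ≠ 0 := (hApos η hη).ne'
        field_simp
      rw [Finset.sum_congr rfl h1, ← Finset.sum_div, hQB (e i)]
    have hmain : d v = ∑ i ∈ Finset.univ.filter
        (fun i => (N (f (fun l => S l (e i l))))⁻¹ • f (fun l => S l (e i l)) = v),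
        (∏ l, c l (e i l)) * N (f (fun l => S l (e i l))) / Zp := by
      rw [Finset.sum_filter, hd v, hZeq, Finset.sum_div]
      have hre : ∑ i, (if (N (f (fun l => S l (e i l))))⁻¹ • f (fun l => S l (e i l)) = v
          then (∏ l, c l (e i l)) * N (f (fun l => S l (e i l))) / Zp else 0) =
          ∑ j : ∀ i, Fin (n i),
          (if (N (f (fun l => S l (j l))))⁻¹ • f (fun l => S l (j l)) = v
          then (∏ l, c l (j l)) * N (f (fun l => S l (j l))) / Zp else 0) :=
        Fintype.sum_equiv e _ _ (fun i => rfl)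
      rw [hre]
      refine Finset.sum_congr rfl fun j _ => ?_
      by_cases hj : (N (f (fun l => S l (j l))))⁻¹ • f (fun l => S l (j l)) = v
      · rw [if_pos hj, if_pos hj, mul_one]
      · rw [if_neg hj, if_neg hj, mul_zero, zero_div]
    rw [hmain]
    exact Finset.sum_congr rfl fun i _ => (hterm i).symm
end

section
/- Sly's identity: Let σ be a configuration of a finite tree generated by the symmetric q-state Potts broadcast process with uniform root, and L(n) the configuration at level n. Define X⁺(n) = P(σ_ρ = a | L) where L is drawn from the distribution of L(n) conditioned on σ_ρ = a, and Y⁺(n) = X⁺(n) − 1/q, x_n = E[Y⁺(n)], z_n = E[(Y⁺(n))²]. Then x_n = E[∑_{a=1}^q (P(σ_ρ = a | L(n)) − 1/q)²] where L(n) is drawn unconditionally, and consequently x_n ≥ z_n ≥ 0. -/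
open Finset

/-- Sly's identity: with a uniform root in the `q`-state broadcast process and
`X⁺(n) = P(σ_ρ = a | L)` for `L` drawn conditioned on `σ_ρ = a`,
`Y⁺ = X⁺ − 1/q`, `x_n = E[Y⁺]`, `z_n = E[(Y⁺)²]` (by symmetry these do not
depend on `a`), one has `x_n = E[∑_a (P(σ_ρ = a | L(n)) − 1/q)²]` with `L(n)`
drawn unconditionally, and consequently `x_n ≥ z_n ≥ 0`. -/
theorem sly_identity {Ω 𝓛 : Type*} [Fintype Ω] [Fintype 𝓛] [DecidableEq 𝓛]
    (q : ℕ) (hq : 1 ≤ q)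
    (P : Ω → ℝ) (hP : ∀ ω, 0 ≤ P ω) (hP1 : ∑ ω, P ω = 1)
    (root : Ω → Fin q) (Lv : Ω → 𝓛)
    -- the root is uniform
    (hroot : ∀ a : Fin q,
      ∑ ω ∈ Finset.univ.filter (fun ω => root ω = a), P ω = 1 / q)
    (PL : 𝓛 → ℝ)
    (hPL : ∀ ℓ, PL ℓ = ∑ ω ∈ Finset.univ.filter (fun ω => Lv ω = ℓ), P ω)
    (hPLpos : ∀ ℓ, 0 < PL ℓ)
    -- joint probability of root value `a` and boundary `ℓ`
    (PJ : Fin q → 𝓛 → ℝ)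
    (hPJ : ∀ a ℓ, PJ a ℓ =
      ∑ ω ∈ Finset.univ.filter (fun ω => root ω = a ∧ Lv ω = ℓ), P ω)
    -- conditional probability of root value `a` given boundary `ℓ`
    (PaL : Fin q → 𝓛 → ℝ) (hPaL : ∀ a ℓ, PaL a ℓ = PJ a ℓ / PL ℓ)
    -- distribution of the boundary conditioned on the root being `a`
    (PLa : Fin q → 𝓛 → ℝ) (hPLa : ∀ a ℓ, PLa a ℓ = PJ a ℓ / (1 / q))
    (xn zn : Fin q → ℝ)
    (hxn : ∀ a, xn a = ∑ ℓ, PLa a ℓ * (PaL a ℓ - 1 / q))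
    (hzn : ∀ a, zn a = ∑ ℓ, PLa a ℓ * (PaL a ℓ - 1 / q) ^ 2)
    -- by the symmetry of the channel these quantities do not depend on `a`
    (hsymx : ∀ a b, xn a = xn b) (hsymz : ∀ a b, zn a = zn b) :
    ∀ a : Fin q,
      xn a = (∑ ℓ, PL ℓ * ∑ b, (PaL b ℓ - 1 / q) ^ 2) ∧
      zn a ≤ xn a ∧ 0 ≤ zn a := by
  have hq0 : (0:ℝ) < q := by exact_mod_cast Nat.lt_of_lt_of_le Nat.zero_lt_one hq
  have hPJnn : ∀ a ℓ, 0 ≤ PJ a ℓ := fun a ℓ => by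
    rw [hPJ]; exact Finset.sum_nonneg fun ω _ => hP ω
  have hPJle : ∀ a ℓ, PJ a ℓ ≤ PL ℓ := fun a ℓ => by
    rw [hPJ, hPL]
    refine Finset.sum_le_sum_of_subset_of_nonneg ?_ fun ω _ _ => hP ω
    intro ω hω; simp only [Finset.mem_filter, Finset.mem_univ, true_and] at hω ⊢
    exact hω.2
  have hsum : ∀ ℓ, ∑ a, PJ a ℓ = PL ℓ := by
    intro ℓ
    have h : ∀ a, PJ a ℓ = ∑ ω ∈ (Finset.univ.filter (fun ω => Lv ω = ℓ)).filter
        (fun ω => root ω = a), P ω := by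
      intro a; rw [hPJ, Finset.filter_filter]
      congr 1; ext ω; simp [and_comm]
    simp_rw [h, hPL]
    exact Finset.sum_fiberwise _ _ _
  have hPaLnn : ∀ a ℓ, 0 ≤ PaL a ℓ := fun a ℓ => by
    rw [hPaL]; exact div_nonneg (hPJnn a ℓ) (hPLpos ℓ).le
  have hPaLle : ∀ a ℓ, PaL a ℓ ≤ 1 := fun a ℓ => by
    rw [hPaL, div_le_one (hPLpos ℓ)]; exact hPJle a ℓ
  have hPaLsum : ∀ ℓ, ∑ a, PaL a ℓ = 1 := fun ℓ => by
    simp_rw [hPaL, ← Finset.sum_div, hsum, div_self (hPLpos ℓ).ne']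
  have hPLa' : ∀ a ℓ, PLa a ℓ = q * (PL ℓ * PaL a ℓ) := fun a ℓ => by
    rw [hPLa, hPaL, mul_div_cancel₀ _ (hPLpos ℓ).ne']
    field_simp
  have key : ∀ ℓ, ∑ b, PaL b ℓ * (PaL b ℓ - 1/q) = ∑ b, (PaL b ℓ - 1/q)^2 := by
    intro ℓ
    have h0 : ∑ b : Fin q, (PaL b ℓ - 1/(q:ℝ)) = 0 := by
      rw [Finset.sum_sub_distrib, hPaLsum, Finset.sum_const, Finset.card_univ,
        Fintype.card_fin, nsmul_eq_mul, mul_one_div, div_self hq0.ne', sub_self]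
    have : ∑ b : Fin q, (PaL b ℓ - 1/q)^2
        = ∑ b, PaL b ℓ * (PaL b ℓ - 1/q) - (1/q) * ∑ b, (PaL b ℓ - 1/q) := by
      rw [Finset.mul_sum, ← Finset.sum_sub_distrib]
      congr 1; ext b; ring
    rw [this, h0, mul_zero, sub_zero]
  intro a
  have hxval : xn a = ∑ ℓ, PL ℓ * ∑ b, (PaL b ℓ - 1/(q:ℝ))^2 := by
    have hq' : ((q:ℝ) * xn a) = (q:ℝ) * ∑ ℓ, PL ℓ * ∑ b, (PaL b ℓ - 1/(q:ℝ))^2 := by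
      have h1 : (q:ℝ) * xn a = ∑ b : Fin q, xn b := by
        rw [Finset.sum_congr rfl fun b _ => hsymx b a, Finset.sum_const,
          Finset.card_univ, Fintype.card_fin, nsmul_eq_mul]
      rw [h1]
      simp_rw [hxn, hPLa']
      rw [Finset.sum_comm]
      rw [Finset.mul_sum]
      refine Finset.sum_congr rfl fun ℓ _ => ?_
      rw [← key ℓ, Finset.mul_sum, Finset.mul_sum]
      refine Finset.sum_congr rfl fun b _ => ?_
      ring
    exact mul_left_cancel₀ hq0.ne' hq'
  refine ⟨hxval, ?_, ?_⟩
  · have h1 : (q:ℝ) * zn a = ∑ b : Fin q, zn b := by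
      rw [Finset.sum_congr rfl fun b _ => hsymz b a, Finset.sum_const,
        Finset.card_univ, Fintype.card_fin, nsmul_eq_mul]
    have h2 : ∑ b : Fin q, zn b ≤ (q:ℝ) * xn a := by
      rw [hxval, Finset.mul_sum]
      simp_rw [hzn, hPLa']
      rw [Finset.sum_comm]
      refine Finset.sum_le_sum fun ℓ _ => ?_
      have hr : (q:ℝ) * (PL ℓ * ∑ b : Fin q, (PaL b ℓ - 1/(q:ℝ))^2)
          = ∑ b : Fin q, (q:ℝ) * (PL ℓ * 1) * (PaL b ℓ - 1/(q:ℝ))^2 := by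
        rw [Finset.mul_sum, Finset.mul_sum]
        exact Finset.sum_congr rfl fun b _ => by ring
      rw [hr]
      refine Finset.sum_le_sum fun b _ => ?_
      exact mul_le_mul_of_nonneg_right (mul_le_mul_of_nonneg_left
        (mul_le_mul_of_nonneg_left (hPaLle b ℓ) (hPLpos ℓ).le) hq0.le) (sq_nonneg _)
    have := h1 ▸ h2
    exact le_of_mul_le_mul_left this hq0
  · rw [hzn]
    refine Finset.sum_nonneg fun ℓ _ => mul_nonneg ?_ (sq_nonneg _)
    rw [hPLa']
    exact mul_nonneg hq0.le (mul_nonneg (hPLpos ℓ).le (hPaLnn a ℓ))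
end
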